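/- Let E = S × {0,1} where S is a finite set of spatial states and the second component is the camouflage mode, and let α > 0. For a search-effort function z : S × {1,...,T} → ℝ define non-detection factors u_z((s,c), t) = exp(−α_c · z(s,t)) with α_0 = α and α_1 = 0, and let f(z) = Σ_{ω∈E^T} q(ω) · Π_{t=1}^{T} u_z(ω_t, t). Let r(·,·; z) and r̄(·,·; z) be the forward and backward quantities defined from u_z by r((s,c),1; z) = p(s,c), r((s,c),t; z) = Σ_{(s',c')∈E} r((s',c'),t−1; z) · γ_{t−1}((s',c'),(s,c)) · u_z((s',c'),t−1), and r̄((s,c),T; z) = 1, r̄((s,c),t; z) = Σ_{(s',c')∈E} r̄((s',c'),t+1; z) · γ_t((s,c),(s',c')) · u_z((s',c'),t+1). Then for every s ∈ S and t ∈ {1,...,T}, increasing the search effort in state s at period t by one unit changes the non-detection probability by f(z + 1_{(s,t)}) − f(z) = r((s,0),t; z) · (e^{−α(z(s,t)+1)} − e^{−α z(s,t)}) · r̄((s,0),t; z), where z + 1_{(s,t)} agrees with z except that its (s,t) entry is z(s,t)+1. (This is the formula used to compute the coefficients of the secant cuts in the cutting plane algorithms for a camouflaging target: only the non-camouflaged copy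 (s,0) of state s contributes, because the detection rate is zero when the target is camouflaged.) -/
import Mathlib


/-- Secant-cut coefficient formula for a camouflaging target: with target states
`E = S × Bool` (second component = camouflage mode), non-detection factors
`u z (s,c) t = exp (-α_c * z s t)` where `α_false = α` and `α_true = 0`, objective
`f z = ∑ paths ω, q ω * ∏_{t'=1}^T u z (ω t') t'`, and forward/backward quantities
`r`, `r̄` defined from `u z`, increasing the search effort at `(s,t)` by one unit gives
`f (z + 1_{(s,t)}) - f z
  = r z (s,0) t * (exp (-α (z s t + 1)) - exp (-α (z s t))) * r̄ z (s,0) t`. -/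
theorem camouflage_secant_coefficient {S : Type*} [Fintype S] [DecidableEq S]
    (T : ℕ) (hT : 0 < T) (α : ℝ) (hα : 0 < α)
    (p : S × Bool → ℝ) (γ : ℕ → S × Bool → S × Bool → ℝ)
    (u : (S → ℕ → ℝ) → S × Bool → ℕ → ℝ)
    (hu : ∀ z sc t, u z sc t = Real.exp (-((if sc.2 then (0 : ℝ) else α) * z sc.1 t)))
    (f : (S → ℕ → ℝ) → ℝ)
    (hf : ∀ z, f z =
      ∑ ω : Fin T → S × Bool,
        (p (ω ⟨0, hT⟩) *
          ∏ t' : Fin (T - 1),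
            γ (t'.val + 1) (ω (Fin.castLE (Nat.sub_le T 1) t'))
              (ω ⟨t'.val + 1, Nat.add_lt_of_lt_sub t'.isLt⟩)) *
        ∏ t' : Fin T, u z (ω t') (t'.val + 1))
    (r rbar : (S → ℕ → ℝ) → S × Bool → ℕ → ℝ)
    (hr1 : ∀ z sc, r z sc 1 = p sc)
    (hrrec : ∀ z t, 2 ≤ t → t ≤ T → ∀ sc,
      r z sc t = ∑ sc', r z sc' (t - 1) * γ (t - 1) sc' sc * u z sc' (t - 1))
    (hrbarT : ∀ z sc, rbar z sc T = 1)
    (hrbarrec : ∀ z t, 1 ≤ t → t ≤ T - 1 → ∀ sc,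
      rbar z sc t = ∑ sc', rbar z sc' (t + 1) * γ t sc sc' * u z sc' (t + 1))
    (z : S → ℕ → ℝ) (s : S) (t : ℕ) (ht1 : 1 ≤ t) (htT : t ≤ T) :
    f (fun s' t' => if s' = s ∧ t' = t then z s' t' + 1 else z s' t') - f z
      = r z (s, false) t *
        (Real.exp (-(α * (z s t + 1))) - Real.exp (-(α * z s t))) *
        rbar z (s, false) t := by
  obtain ⟨n, rfl⟩ : ∃ n, T = n + 1 := ⟨T - 1, by omega⟩
  -- closed form for rbar as a sum over suffix paths
  have key : ∀ (w : S → ℕ → ℝ) (k : ℕ), k ≤ n → ∀ sc : S × Bool,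
      rbar w sc (n + 1 - k) = ∑ ω : Fin k → S × Bool,
        ∏ i : Fin k, γ (n + 1 - k + i.val) ((Fin.cons sc ω : Fin (k + 1) → S × Bool) i.castSucc) (ω i) *
          u w (ω i) (n + 1 - k + i.val + 1) := by
    intro w k
    induction k with
    | zero =>
      intro _ sc
      simpa using hrbarT w sc
    | succ k ih =>
      intro hk sc
      have hk' : k ≤ n := Nat.le_of_succ_le hk
      have h1 : n + 1 - (k + 1) = n - k := by omega
      have h2 : n - k + 1 = n + 1 - k := by omega
      rw [h1, hrbarrec w (n - k) (by omega) (by omega)]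
      rw [← Equiv.sum_comp (Fin.consEquiv (fun _ : Fin (k + 1) => S × Bool))
        (fun ω : Fin (k + 1) → S × Bool =>
          ∏ i : Fin (k + 1), γ (n - k + i.val) ((Fin.cons sc ω : Fin (k + 2) → S × Bool) i.castSucc) (ω i) *
            u w (ω i) (n - k + i.val + 1))]
      conv_rhs => rw [Fintype.sum_prod_type]
      refine Finset.sum_congr rfl fun sc' _ => ?_
      rw [h2, ih hk' sc', Finset.sum_mul, Finset.sum_mul]
      refine Finset.sum_congr rfl fun ω _ => ?_
      simp only [Fin.consEquiv_apply]
      rw [Fin.prod_univ_succ]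
      simp only [Fin.castSucc_zero, Fin.cons_zero, Fin.val_zero, Nat.add_zero,
        Fin.cons_succ, Fin.val_succ, ← Fin.succ_castSucc, Fin.consEquiv_apply]
      have hprod : ∀ i : Fin k,
          γ (n - k + (i.val + 1)) ((Fin.cons sc' ω : Fin (k + 1) → S × Bool) i.castSucc) (ω i) *
            u w (ω i) (n - k + (i.val + 1) + 1)
          = γ (n + 1 - k + i.val) ((Fin.cons sc' ω : Fin (k + 1) → S × Bool) i.castSucc) (ω i) *
            u w (ω i) (n + 1 - k + i.val + 1) := by
        intro i
        rw [show n - k + (i.val + 1) = n + 1 - k + i.val by omega]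
      rw [Finset.prod_congr rfl fun i _ => hprod i, h2]
      ring
  -- f as sum over first state weighted by rbar at time 1
  have hfF : ∀ w : S → ℕ → ℝ, f w = ∑ sc : S × Bool, p sc * u w sc 1 * rbar w sc 1 := by
    intro w
    have hone : ∀ sc : S × Bool, rbar w sc 1 = ∑ ω : Fin n → S × Bool,
        ∏ i : Fin n, γ (1 + i.val) ((Fin.cons sc ω : Fin (n + 1) → S × Bool) i.castSucc) (ω i) *
          u w (ω i) (1 + i.val + 1) := by
      intro sc
      have h := key w n le_rfl sc
      rwa [show n + 1 - n = 1 by omega] at h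
    rw [hf w]
    rw [← Equiv.sum_comp (Fin.consEquiv (fun _ : Fin (n + 1) => S × Bool))
      (fun ω : Fin (n + 1) → S × Bool =>
        (p (ω ⟨0, hT⟩) *
          ∏ t' : Fin (n + 1 - 1),
            γ (t'.val + 1) (ω (Fin.castLE (Nat.sub_le (n + 1) 1) t'))
              (ω ⟨t'.val + 1, Nat.add_lt_of_lt_sub t'.isLt⟩)) *
        ∏ t' : Fin (n + 1), u w (ω t') (t'.val + 1))]
    rw [Fintype.sum_prod_type]
    refine Finset.sum_congr rfl fun sc _ => ?_
    rw [hone sc, Finset.mul_sum]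
    refine Finset.sum_congr rfl fun ω _ => ?_
    simp only [Fin.consEquiv_apply]
    have e0 : (Fin.cons sc ω : Fin (n + 1) → S × Bool) ⟨0, hT⟩ = sc := rfl
    have ecs : ∀ t' : Fin n,
        (Fin.cons sc ω : Fin (n + 1) → S × Bool) (Fin.castLE (Nat.sub_le (n + 1) 1) t')
          = (Fin.cons sc ω : Fin (n + 1) → S × Bool) t'.castSucc := fun t' => rfl
    have esu : ∀ t' : Fin n,
        (Fin.cons sc ω : Fin (n + 1) → S × Bool)
            ⟨t'.val + 1, Nat.add_lt_of_lt_sub t'.isLt⟩ = ω t' := by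
      intro t'
      have : (⟨t'.val + 1, Nat.add_lt_of_lt_sub t'.isLt⟩ : Fin (n + 1)) = t'.succ := rfl
      rw [this, Fin.cons_succ]
    simp only [e0, ecs, esu]
    rw [Fin.prod_univ_succ]
    simp only [Fin.cons_zero, Fin.cons_succ, Fin.val_zero, Fin.val_succ, Nat.zero_add,
      Nat.add_sub_cancel]
    have hprod : ∀ i : Fin n,
        γ (1 + i.val) ((Fin.cons sc ω : Fin (n + 1) → S × Bool) i.castSucc) (ω i) * u w (ω i) (1 + i.val + 1)
          = γ (i.val + 1) ((Fin.cons sc ω : Fin (n + 1) → S × Bool) i.castSucc) (ω i) * u w (ω i) (i.val + 1 + 1) := by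
      intro i
      rw [Nat.add_comm 1 i.val]
    rw [Finset.prod_congr rfl fun i _ => hprod i, Finset.prod_mul_distrib]
    have hfix : (∏ x : Fin (n + 1 - 1), γ (x.val + 1)
          ((Fin.cons sc ω : Fin (n + 1) → S × Bool) x.castSucc) (ω x))
        = ∏ x : Fin n, γ (x.val + 1)
          ((Fin.cons sc ω : Fin (n + 1) → S × Bool) x.castSucc) (ω x) := rfl
    rw [hfix]
    ring
  -- telescoping: the forward-backward pairing is independent of the time
  have tele : ∀ (w : S → ℕ → ℝ) (m : ℕ), 1 ≤ m → m ≤ n + 1 →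
      ∑ sc : S × Bool, r w sc m * u w sc m * rbar w sc m
        = ∑ sc : S × Bool, p sc * u w sc 1 * rbar w sc 1 := by
    intro w m
    induction m with
    | zero => intro h; omega
    | succ m ih =>
      intro _ hm
      rcases Nat.eq_zero_or_pos m with hm0 | hm1
      · subst hm0
        simp only [hr1]
      · simp only [hrrec w (m + 1) (by omega) hm, Nat.add_sub_cancel]
        rw [← ih hm1 (by omega)]
        simp only [Finset.sum_mul]
        rw [Finset.sum_comm]
        refine Finset.sum_congr rfl fun sc' _ => ?_
        rw [hrbarrec w m hm1 (by omega) sc', Finset.mul_sum]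
        refine Finset.sum_congr rfl fun sc _ => ?_
        ring
  have Fconst : ∀ w : S → ℕ → ℝ,
      f w = ∑ sc : S × Bool, r w sc t * u w sc t * rbar w sc t :=
    fun w => (hfF w).trans (tele w t ht1 htT).symm
  set z' : S → ℕ → ℝ := fun s' t' => if s' = s ∧ t' = t then z s' t' + 1 else z s' t'
    with hz'
  have hz'ne : ∀ (s' : S) (t' : ℕ), t' ≠ t → z' s' t' = z s' t' := by
    intro s' t' h
    simp only [hz']
    rw [if_neg (by tauto)]
  have hu_ne : ∀ (sc : S × Bool) (t'' : ℕ), t'' ≠ t → u z' sc t'' = u z sc t'' := by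
    intro sc t'' h
    rw [hu, hu, hz'ne sc.1 t'' h]
  have hr_eq : ∀ m, 1 ≤ m → m ≤ t → ∀ sc, r z' sc m = r z sc m := by
    intro m
    induction m with
    | zero => intro h; omega
    | succ m ih =>
      intro _ hm sc
      rcases Nat.eq_zero_or_pos m with hm0 | hm1
      · subst hm0
        rw [hr1, hr1]
      · rw [hrrec z' (m + 1) (by omega) (by omega), hrrec z (m + 1) (by omega) (by omega)]
        refine Finset.sum_congr rfl fun sc' _ => ?_
        simp only [Nat.add_sub_cancel]
        rw [ih hm1 (by omega) sc', hu_ne sc' m (by omega)]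
  have hrbar_eq : ∀ k m, t ≤ m → m ≤ n + 1 → n + 1 - m ≤ k → ∀ sc,
      rbar z' sc m = rbar z sc m := by
    intro k
    induction k with
    | zero =>
      intro m h1 h2 h3 sc
      have : m = n + 1 := by omega
      subst this
      rw [hrbarT, hrbarT]
    | succ k ih =>
      intro m h1 h2 h3 sc
      by_cases hm : m = n + 1
      · subst hm
        rw [hrbarT, hrbarT]
      · rw [hrbarrec z' m (by omega) (by omega), hrbarrec z m (by omega) (by omega)]
        refine Finset.sum_congr rfl fun sc' _ => ?_
        rw [ih (m + 1) (by omega) (by omega) (by omega) sc', hu_ne sc' (m + 1) (by omega)]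
  rw [Fconst z', Fconst z, ← Finset.sum_sub_distrib]
  have hterm : ∀ sc : S × Bool,
      r z' sc t * u z' sc t * rbar z' sc t - r z sc t * u z sc t * rbar z sc t
        = r z sc t * (u z' sc t - u z sc t) * rbar z sc t := by
    intro sc
    rw [hr_eq t ht1 le_rfl sc, hrbar_eq (n + 1) t le_rfl htT (by omega) sc]
    ring
  rw [Finset.sum_congr rfl fun sc _ => hterm sc]
  rw [Finset.sum_eq_single (s, false)]
  · have h1 : u z' (s, false) t = Real.exp (-(α * (z s t + 1))) := by
      rw [hu]
      simp only [hz']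
      simp
    have h2 : u z (s, false) t = Real.exp (-(α * z s t)) := by
      rw [hu]
      norm_num
    rw [h1, h2]
  · intro sc _ hsc
    have : u z' sc t = u z sc t := by
      obtain ⟨s₁, b⟩ := sc
      cases b with
      | true => rw [hu, hu]; simp
      | false =>
        have hs : s₁ ≠ s := by
          intro h
          exact hsc (by rw [h])
        rw [hu, hu]
        simp [hz', hs]
    rw [this]
    ring
  · intro h
    exact absurd (Finset.mem_univ _) h
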